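/- Let {G_i}_{i≥0} be a group chain in a group G, with limit core C_∞, natural homomorphism ι : G → C_∞, and discriminant group D_x ⊆ C_∞. Then the rational core ⋂_{k ∈ G} ι(k) · D_x · ι(k)^{-1} is the trivial subgroup of C_∞. -/

import Mathlib

namespace CantorChains

variable {G : Type*} [Group G]

/-- The map between left coset spaces induced by an inclusion of subgroups. -/
def cosetMap {H K : Subgroup G} (h : H ≤ K) : G ⧸ H → G ⧸ K :=
  Quotient.map' id fun a b hab => by
    rw [QuotientGroup.leftRel_apply] at hab ⊢
    exact h hab

@[simp] lemma cosetMap_mk {H K : Subgroup G} (h : H ≤ K) (a : G) :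
    cosetMap h (QuotientGroup.mk a) = QuotientGroup.mk a := rfl

instance (H : Subgroup G) : TopologicalSpace (G ⧸ H) := ⊥
instance (H : Subgroup G) : DiscreteTopology (G ⧸ H) := ⟨rfl⟩

lemma cosetMap_smul {H K : Subgroup G} (h : H ≤ K) (g : G) (q : G ⧸ H) :
    cosetMap h (g • q) = g • cosetMap h q := by
  induction q using Quotient.inductionOn' with
  | h a => rfl

/-- The inverse limit of the coset spaces of a (nested) family of subgroups. -/
def InvLim (V : ℕ → Subgroup G) : Type _ :=
  {u : ∀ i, G ⧸ V i // ∀ i j, i ≤ j → ∀ hle : V j ≤ V i, cosetMap hle (u j) = u i}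

instance (V : ℕ → Subgroup G) : TopologicalSpace (InvLim V) :=
  instTopologicalSpaceSubtype

/-- The natural left `G`-action on the inverse limit. -/
instance (V : ℕ → Subgroup G) : MulAction G (InvLim V) where
  smul g u := ⟨fun i => g • u.1 i, fun i j hij hle => by
    rw [cosetMap_smul, u.2 i j hij hle]⟩
  one_smul u := Subtype.ext (funext fun i => one_smul _ _)
  mul_smul a b u := Subtype.ext (funext fun i => mul_smul a b (u.1 i))

lemma smul_coord (V : ℕ → Subgroup G) (g : G) (u : InvLim V) (i : ℕ) :
    (g • u).1 i = g • u.1 i := rfl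

/-- The canonical basepoint `(eG_i)` of the inverse limit. -/
def basepoint (V : ℕ → Subgroup G) : InvLim V :=
  ⟨fun _ => QuotientGroup.mk 1, fun _ _ _ _ => rfl⟩

/-- A group chain: a properly descending chain of finite index subgroups,
starting at the full group. -/
structure GroupChain (G : Type*) [Group G] where
  sub : ℕ → Subgroup G
  sub_zero : sub 0 = ⊤
  sub_lt : ∀ i, sub (i + 1) < sub i
  finiteIndex : ∀ i, (sub i).FiniteIndex

lemma GroupChain.antitone (C : GroupChain G) : Antitone C.sub :=
  antitone_nat_of_succ_le fun i => (C.sub_lt i).le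

/-- Equivalence of group chains: some interleaving of subsequences is again a chain. -/
def ChainEquiv (Gc Hc : GroupChain G) : Prop :=
  ∃ (Kc : GroupChain G) (a b : ℕ → ℕ), StrictMono a ∧ StrictMono b ∧
    (∀ k, Kc.sub (2 * k) = Gc.sub (a k)) ∧ (∀ k, Kc.sub (2 * k + 1) = Hc.sub (b k))

/-- The conjugate `g H g⁻¹` of a subgroup. -/
def conjSubgroup (g : G) (H : Subgroup G) : Subgroup G :=
  H.map (MulAut.conj g).toMonoidHom

/-- Conjugate equivalence of group chains. -/
def ChainConjEquiv (Gc Hc : GroupChain G) : Prop :=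
  ∃ g : ℕ → G,
    (∀ i j, i ≤ j → (QuotientGroup.mk (g j) : G ⧸ Gc.sub i) = QuotientGroup.mk (g i)) ∧
    ∃ (Kc : GroupChain G) (a b : ℕ → ℕ), StrictMono a ∧ StrictMono b ∧
      (∀ k, Kc.sub (2 * k) = conjSubgroup (g (a k)) (Gc.sub (a k))) ∧
      (∀ k, Kc.sub (2 * k + 1) = Hc.sub (b k))

lemma cosetMap_mul {N M : Subgroup G} [N.Normal] [M.Normal] (h : N ≤ M) (q r : G ⧸ N) :
    cosetMap h (q * r) = cosetMap h q * cosetMap h r := by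
  induction q using Quotient.inductionOn' with
  | h a =>
    induction r using Quotient.inductionOn' with
    | h b => rfl

lemma cosetMap_inv {N M : Subgroup G} [N.Normal] [M.Normal] (h : N ≤ M) (q : G ⧸ N) :
    cosetMap h q⁻¹ = (cosetMap h q)⁻¹ := by
  induction q using Quotient.inductionOn' with
  | h a => rfl

/-- The inverse limit of the quotient groups `A ⧸ N i`, as a subgroup of the product. -/
def quotLim {A : Type*} [Group A] (N : ℕ → Subgroup A) [∀ i, (N i).Normal] :
    Subgroup (∀ i, A ⧸ N i) where
  carrier := {u | ∀ i j, i ≤ j → ∀ hle : N j ≤ N i, cosetMap hle (u j) = u i}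
  one_mem' := fun _ _ _ _ => rfl
  mul_mem' := fun {a b} ha hb i j hij hle => by
    show cosetMap hle (a j * b j) = a i * b i
    rw [cosetMap_mul, ha i j hij hle, hb i j hij hle]
  inv_mem' := fun {a} ha i j hij hle => by
    show cosetMap hle (a j)⁻¹ = (a i)⁻¹
    rw [cosetMap_inv, ha i j hij hle]

variable (V : ℕ → Subgroup G)

/-- The limit core `C_∞ = lim← G ⧸ C_i` of a chain of subgroups. -/
def limitCore : Subgroup (∀ i, G ⧸ (V i).normalCore) :=
  quotLim fun i => (V i).normalCore

/-- The discriminant group `D_x = lim← G_i ⧸ C_i` of a chain of subgroups. -/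
def discriminant : Subgroup (∀ i, G ⧸ (V i).normalCore) where
  carrier := {u | u ∈ limitCore V ∧ ∀ i, ∃ g ∈ V i, QuotientGroup.mk g = u i}
  one_mem' := ⟨(limitCore V).one_mem, fun i => ⟨1, (V i).one_mem, rfl⟩⟩
  mul_mem' := fun {a b} ha hb => ⟨mul_mem ha.1 hb.1, fun i => by
    obtain ⟨g, hg, hga⟩ := ha.2 i
    obtain ⟨h, hh, hhb⟩ := hb.2 i
    exact ⟨g * h, mul_mem hg hh, by rw [Pi.mul_apply, ← hga, ← hhb]; rfl⟩⟩
  inv_mem' := fun {a} ha => ⟨inv_mem ha.1, fun i => by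
    obtain ⟨g, hg, hga⟩ := ha.2 i
    exact ⟨g⁻¹, inv_mem hg, by rw [Pi.inv_apply, ← hga]; rfl⟩⟩

lemma discriminant_le_limitCore : discriminant V ≤ limitCore V := fun _ hu => hu.1

/-- The natural homomorphism `ι : G → ∏ G ⧸ C_i`. -/
def iotaPi : G →* ∀ i, G ⧸ (V i).normalCore :=
  MonoidHom.mk' (fun g i => QuotientGroup.mk g) fun _ _ => rfl

lemma iotaPi_mem_limitCore (g : G) : iotaPi V g ∈ limitCore V :=
  fun _ _ _ _ => rfl

/-- The natural homomorphism `ι : G → C_∞` into the limit core. -/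
def iotaC : G →* ↥(limitCore V) :=
  (iotaPi V).codRestrict _ (iotaPi_mem_limitCore V)

end CantorChains

namespace CantorChains

/-- For a group chain, the "rational core"
`⋂_{k ∈ G} ι(k) · D_x · ι(k)⁻¹` of the discriminant group is trivial. -/
theorem rational_core_trivial {G : Type*} [Group G] (Gc : GroupChain G) :
    (⨅ k : G, (discriminant Gc.sub).map (MulAut.conj (iotaPi Gc.sub k)).toMonoidHom) = ⊥ := by
  rw [eq_bot_iff]
  intro u hu
  rw [Subgroup.mem_iInf] at hu
  rw [Subgroup.mem_bot]
  funext i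
  obtain ⟨h, hh⟩ := QuotientGroup.mk_surjective (u i)
  show u i = (1 : G ⧸ (Gc.sub i).normalCore)
  rw [← hh, QuotientGroup.eq_one_iff]
  intro b
  obtain ⟨d, hd, hdu⟩ := Subgroup.mem_map.mp (hu b⁻¹)
  obtain ⟨g, hg, hgd⟩ := hd.2 i
  have hcomp : (QuotientGroup.mk (b⁻¹ * g * b) : G ⧸ (Gc.sub i).normalCore) = u i := by
    have := congrFun hdu i
    simp only [MulEquiv.toMonoidHom_eq_coe, MonoidHom.coe_coe, MulAut.conj_apply] at this
    rw [← this]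
    show _ = QuotientGroup.mk b⁻¹ * d i * (QuotientGroup.mk b⁻¹)⁻¹
    rw [← hgd]
    rw [← QuotientGroup.mk_inv, ← QuotientGroup.mk_mul, ← QuotientGroup.mk_mul]
    congr 1
    group
  rw [← hh] at hcomp
  have hc : h⁻¹ * (b⁻¹ * g * b) ∈ (Gc.sub i).normalCore :=
    (QuotientGroup.eq.mp hcomp.symm)
  have hc2 : b * (h⁻¹ * (b⁻¹ * g * b))⁻¹ * b⁻¹ ∈ Gc.sub i :=
    inv_mem hc b
  have : b * h * b⁻¹ = g * (b * (h⁻¹ * (b⁻¹ * g * b))⁻¹ * b⁻¹) := by group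
  rw [this]
  exact mul_mem hg hc2

end CantorChains
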